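/- The Chermak-Delgado lattice of ZM(m,n,r) is the single subgroup ⟨a, b^d⟩, where d = ord_m(r); i.e. CD(ZM(m,n,r)) = {⟨a, b^d⟩}. -/

import Mathlib

set_option linter.unusedSectionVars false
set_option linter.unusedVariables false
set_option maxHeartbeats 1000000

/-- `ordMod m r` is the multiplicative order of `r` modulo `m`. -/
noncomputable def ordMod (m r : ℕ) : ℕ := orderOf (r : ZMod m)

/-- The Chermak–Delgado measure of a subgroup: `|H| * |C_G(H)|`. -/
noncomputable def chermakDelgadoMeasure {G : Type*} [Group G] (H : Subgroup G) : ℕ :=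
  Nat.card H * Nat.card (Subgroup.centralizer (H : Set G))

namespace ZMaux

lemma eq_of_le_of_mul_eq {a b A B : ℕ} (h1 : a ≤ A) (h2 : b ≤ B) (h : a * b = A * B)
    (ha : 0 < a) (hb : 0 < b) : a = A ∧ b = B := by
  have hA : 0 < A := lt_of_lt_of_le ha h1
  rcases lt_or_eq_of_le h1 with hlt | heq
  · exfalso
    have hlt2 : a * b < A * B := by
      calc a * b < A * b := mul_lt_mul_of_pos_right hlt hb
        _ ≤ A * B := mul_le_mul_right h2 A
    exact hlt2.ne h
  · subst heq
    exact ⟨rfl, Nat.eq_of_mul_eq_mul_left ha h⟩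

variable {G : Type*} [Group G] [Finite G]


variable {G : Type*} [Group G] [Finite G]

lemma comm_rule {a b : G} {r : ℕ} (hrel : b⁻¹ * a * b = a ^ r) :
    ∀ i j : ℕ, a ^ i * b ^ j = b ^ j * a ^ (i * r ^ j) := by
  have h1 : a * b = b * a ^ r := by
    have : b * (b⁻¹ * a * b) = b * a ^ r := by rw [hrel]
    simpa [mul_assoc] using this
  have h2 : ∀ i : ℕ, a ^ i * b = b * a ^ (i * r) := by
    intro i
    induction i with
    | zero => simp
    | succ i ih =>
      have : a ^ (i+1) * b = a * (a ^ i * b) := by rw [pow_succ']; group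
      rw [this, ih, ← mul_assoc, h1, mul_assoc, ← pow_add]
      ring_nf
  intro i j
  induction j with
  | zero => simp
  | succ j ih =>
    have : a ^ i * b ^ (j+1) = (a ^ i * b ^ j) * b := by rw [pow_succ]; group
    rw [this, ih, mul_assoc, h2, ← mul_assoc, ← pow_succ]
    ring_nf

/-- The subgroup of elements of the form `b^j * a^i`. -/
def nfSubgroup (a b : G) {r : ℕ} (hrel : b⁻¹ * a * b = a ^ r) : Subgroup G where
  carrier := {x | ∃ j i : ℕ, x = b ^ j * a ^ i}
  one_mem' := ⟨0, 0, by simp⟩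
  mul_mem' := by
    rintro x y ⟨j, i, rfl⟩ ⟨l, k, rfl⟩
    refine ⟨j + l, i * r ^ l + k, ?_⟩
    calc (b^j*a^i)*(b^l*a^k) = b^j * (a^i * b^l) * a^k := by group
      _ = b^j * (b^l * a^(i*r^l)) * a^k := by rw [comm_rule hrel]
      _ = b^(j+l) * a^(i*r^l+k) := by rw [pow_add, pow_add]; group
  inv_mem' := by
    rintro x ⟨j, i, rfl⟩
    have hM : 1 ≤ orderOf a := orderOf_pos a
    have hN : 1 ≤ orderOf b := orderOf_pos b
    set M := orderOf a
    set N := orderOf b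
    refine ⟨j*(N-1), (i*(M-1)) * r^(j*(N-1)), ?_⟩
    have key : (b^j * a^i) * (a^(i*(M-1)) * b^(j*(N-1))) = 1 := by
      have hA : a^i * a^(i*(M-1)) = 1 := by
        rw [← pow_add]
        have heq : i + i*(M-1) = i * M := by
          conv_rhs => rw [← Nat.sub_add_cancel hM]
          rw [Nat.mul_succ]; omega
        rw [heq, mul_comm, pow_mul, pow_orderOf_eq_one, one_pow]
      have hB : b^j * b^(j*(N-1)) = 1 := by
        rw [← pow_add]
        have heq : j + j*(N-1) = j * N := by
          conv_rhs => rw [← Nat.sub_add_cancel hN]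
          rw [Nat.mul_succ]; omega
        rw [heq, mul_comm, pow_mul, pow_orderOf_eq_one, one_pow]
      calc (b^j * a^i) * (a^(i*(M-1)) * b^(j*(N-1)))
          = b^j * (a^i * a^(i*(M-1))) * b^(j*(N-1)) := by group
        _ = b^j * b^(j*(N-1)) := by rw [hA]; group
        _ = 1 := hB
    have hinv : (b^j * a^i)⁻¹ = a^(i*(M-1)) * b^(j*(N-1)) := by
      exact inv_eq_of_mul_eq_one_right key
    rw [hinv, comm_rule hrel]

lemma nf_exists {a b : G} {r : ℕ} (hrel : b⁻¹ * a * b = a ^ r)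
    (hgen : Subgroup.closure {a, b} = ⊤) (x : G) : ∃ j i : ℕ, x = b ^ j * a ^ i := by
  have hle : Subgroup.closure {a, b} ≤ nfSubgroup a b hrel := by
    rw [Subgroup.closure_le]
    rintro x (rfl | rfl)
    · exact ⟨0, 1, by simp⟩
    · exact ⟨1, 0, by simp⟩
  have := hle (hgen ▸ Subgroup.mem_top x)
  exact this

lemma nf_unique {a b : G} {m n : ℕ} (hmn : Nat.Coprime m n)
    (ha : orderOf a = m) (hb : orderOf b = n) {j i l k : ℕ}
    (h : b ^ j * a ^ i = b ^ l * a ^ k) :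
    (j : ZMod n) = (l : ZMod n) ∧ (i : ZMod m) = (k : ZMod m) := by
  have hx : (b^l)⁻¹ * b^j = a^k * (a^i)⁻¹ := by
    calc (b^l)⁻¹ * b^j = (b^l)⁻¹ * (b^j * a^i) * (a^i)⁻¹ := by group
      _ = (b^l)⁻¹ * (b^l * a^k) * (a^i)⁻¹ := by rw [h]
      _ = a^k * (a^i)⁻¹ := by group
  set x := (b^l)⁻¹ * b^j with hxdef
  have hxb : x ∈ Subgroup.zpowers b := by
    refine ⟨(j : ℤ) - l, ?_⟩
    show b ^ ((j:ℤ) - (l:ℤ)) = x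
    rw [zpow_sub, zpow_natCast, zpow_natCast, hxdef]
    group
  have hxa : x ∈ Subgroup.zpowers a := by
    refine ⟨(k : ℤ) - i, ?_⟩
    show a ^ ((k:ℤ) - (i:ℤ)) = x
    rw [zpow_sub, zpow_natCast, zpow_natCast, hx]
  have h1 : orderOf x ∣ m := ha ▸ orderOf_dvd_of_mem_zpowers hxa
  have h2 : orderOf x ∣ n := hb ▸ orderOf_dvd_of_mem_zpowers hxb
  have : orderOf x = 1 := Nat.eq_one_of_dvd_coprimes hmn h1 h2
  have hx1 : x = 1 := orderOf_eq_one_iff.mp this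
  constructor
  · have : b ^ j = b ^ l := by
      have := hx1; rw [hxdef] at this
      rw [inv_mul_eq_one] at this; exact this.symm
    rw [ZMod.natCast_eq_natCast_iff, ← hb]
    exact pow_eq_pow_iff_modEq.mp this
  · have : a ^ k = a ^ i := by
      have := hx1; rw [hx] at this
      rw [mul_inv_eq_one] at this; exact this
    rw [ZMod.natCast_eq_natCast_iff, ← ha]
    exact (pow_eq_pow_iff_modEq.mp this).symm



variable {G : Type*} [Group G] [Finite G]


lemma nf_mul {a b : G} {r : ℕ} (hrel : b⁻¹ * a * b = a ^ r) (j i l k : ℕ) :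
    (b^j*a^i)*(b^l*a^k) = b^(j+l)*a^(i*r^l+k) := by
  calc (b^j*a^i)*(b^l*a^k) = b^j * (a^i * b^l) * a^k := by group
    _ = b^j * (b^l * a^(i*r^l)) * a^k := by rw [comm_rule hrel]
    _ = b^(j+l) * a^(i*r^l+k) := by rw [pow_add, pow_add]; group

lemma psi_exists {a b : G} {m n r : ℕ} (hmn : Nat.Coprime m n)
    (ha : orderOf a = m) (hb : orderOf b = n) (hrel : b⁻¹ * a * b = a ^ r)
    (hgen : Subgroup.closure {a, b} = ⊤) :
    ∃ ψ : G →* Multiplicative (ZMod n),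
      ∀ j i : ℕ, ψ (b ^ j * a ^ i) = Multiplicative.ofAdd ((j : ZMod n)) := by
  classical
  choose J I hJI using nf_exists hrel hgen
  have hwd : ∀ (x : G) (j i : ℕ), x = b^j*a^i → ((J x : ZMod n)) = (j : ZMod n) := by
    intro x j i hx
    exact (nf_unique hmn ha hb (by rw [← hJI x, ← hx])).1
  refine ⟨MonoidHom.mk' (fun x => Multiplicative.ofAdd ((J x : ZMod n))) ?_, ?_⟩
  · intro x y
    have hxy : x*y = b^(J x + J y) * a^(I x * r^(J y) + I y) := by
      conv_lhs => rw [hJI x, hJI y]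
      exact nf_mul hrel _ _ _ _
    have h2 := hwd (x*y) _ _ hxy
    show Multiplicative.ofAdd ((J (x*y) : ZMod n)) =
      Multiplicative.ofAdd ((J x : ZMod n)) * Multiplicative.ofAdd ((J y : ZMod n))
    rw [h2, ← ofAdd_add]
    push_cast
    rfl
  · intro j i
    show Multiplicative.ofAdd ((J (b^j*a^i) : ZMod n)) = Multiplicative.ofAdd ((j : ZMod n))
    rw [hwd (b^j*a^i) j i rfl]

lemma psi_ker {a b : G} {m n r : ℕ} (hmn : Nat.Coprime m n)
    (ha : orderOf a = m) (hb : orderOf b = n) (hrel : b⁻¹ * a * b = a ^ r)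
    (hgen : Subgroup.closure {a, b} = ⊤)
    (ψ : G →* Multiplicative (ZMod n))
    (hψ : ∀ j i : ℕ, ψ (b ^ j * a ^ i) = Multiplicative.ofAdd ((j : ZMod n))) :
    ψ.ker = Subgroup.zpowers a := by
  apply le_antisymm
  · intro x hx
    obtain ⟨j, i, rfl⟩ := nf_exists hrel hgen x
    have h1 : ψ (b^j*a^i) = 1 := hx
    rw [hψ] at h1
    have hj : (j : ZMod n) = 0 := by
      simpa using congrArg Multiplicative.toAdd h1
    have hdvd : n ∣ j := (ZMod.natCast_eq_zero_iff j n).mp hj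
    have hb1 : b ^ j = 1 := orderOf_dvd_iff_pow_eq_one.mp (hb ▸ hdvd)
    rw [hb1, one_mul]
    exact ⟨(i : ℤ), by simp⟩
  · rw [Subgroup.zpowers_le]
    show ψ a = 1
    have := hψ 0 1
    simpa using this

lemma card_eq_map_mul_inf {H : Type*} [Group H] (ψ : G →* H) (K : Subgroup G) :
    Nat.card K = Nat.card (K.map ψ) * Nat.card ↥(ψ.ker ⊓ K) := by
  have h1 := Subgroup.card_eq_card_quotient_mul_card_subgroup (ψ.domRestrict K).ker
  have e1 : Nat.card (K ⧸ (ψ.domRestrict K).ker) = Nat.card (K.map ψ) := by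
    rw [← MonoidHom.restrict_range K ψ]
    exact Nat.card_congr (QuotientGroup.quotientKerEquivRange (ψ.domRestrict K)).toEquiv
  have e2 : Nat.card (ψ.domRestrict K).ker = Nat.card ↥(ψ.ker ⊓ K) := by
    rw [MonoidHom.ker_restrict]
    rw [← Subgroup.inf_subgroupOf_right]
    exact Nat.card_congr (Subgroup.subgroupOfEquivOfLe inf_le_right).toEquiv
  rw [h1, e1, e2]



lemma binom_aux : ∀ (e u : ℕ), ∃ c, (1+u)^e = 1 + e*u + u^2*c := by
  intro e u
  induction e with
  | zero => exact ⟨0, by ring⟩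
  | succ e ih =>
    obtain ⟨c, hc⟩ := ih
    exact ⟨c + e + u*c, by rw [pow_succ, hc]; ring⟩

lemma keyNT (m n r k : ℕ) (hm : 0 < m) (hn : 0 < n) (hk : k ∣ m)
    (hrn : r ^ n ≡ 1 [MOD m])
    (hcop : Nat.Coprime (orderOf ((r : ZMod m))) m) :
    k * orderOf ((r : ZMod m)) ≤ m * orderOf ((r : ZMod k)) ∧
      (k < m → k * orderOf ((r : ZMod m)) < m * orderOf ((r : ZMod k))) := by
  have hk0 : 0 < k := Nat.pos_of_dvd_of_pos hk hm
  haveI : NeZero m := ⟨hm.ne'⟩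
  haveI : NeZero k := ⟨hk0.ne'⟩
  have hrm : (r : ZMod m) ^ n = 1 := by
    have h1 : ((r ^ n : ℕ) : ZMod m) = ((1 : ℕ) : ZMod m) :=
      (ZMod.natCast_eq_natCast_iff _ _ _).mpr hrn
    push_cast at h1; exact h1
  have hu : IsUnit (r : ZMod m) := IsUnit.of_pow_eq_one hrm hn.ne'
  set d := orderOf ((r : ZMod m)) with hd
  set t := orderOf ((r : ZMod k)) with ht
  have hrk : (r : ZMod k) ^ n = 1 := by
    have h2 : r ^ n ≡ 1 [MOD k] := hrn.of_dvd hk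
    have h1 : ((r ^ n : ℕ) : ZMod k) = ((1 : ℕ) : ZMod k) :=
      (ZMod.natCast_eq_natCast_iff _ _ _).mpr h2
    push_cast at h1; exact h1
  have ht0 : 0 < t :=
    orderOf_pos_iff.mpr (isOfFinOrder_iff_pow_eq_one.mpr ⟨n, hn, hrk⟩)
  obtain ⟨ru, hru⟩ := hu
  have hdu : orderOf ru = d := by rw [hd, ← hru]; exact orderOf_units.symm
  -- the casting hom
  set χ : ZMod m →+* ZMod k := ZMod.castHom hk (ZMod k) with hχ
  set μ : (ZMod m)ˣ →* (ZMod k)ˣ := Units.map (χ : ZMod m →* ZMod k) with hμ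
  have hχr : χ ((r : ZMod m)) = (r : ZMod k) := map_natCast χ r
  have hμru : ((μ ru : (ZMod k)ˣ) : ZMod k) = (r : ZMod k) := by
    simp [hμ, hru, hχr]
  have htμ : orderOf (μ ru) = t := by
    rw [← orderOf_units (y := μ ru), hμru, ht]
  have htd : t ∣ d := by
    rw [← htμ, ← hdu]; exact orderOf_map_dvd μ ru
  -- s = ru^t lies in the kernel of μ
  set s : (ZMod m)ˣ := ru ^ t with hs
  have hs_ker : s ∈ μ.ker := by
    rw [MonoidHom.mem_ker, hs, map_pow, ← htμ, pow_orderOf_eq_one]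
  have hs_ord : orderOf s = d / t := by
    rw [hs, orderOf_pow, hdu, Nat.gcd_eq_right htd]
  have hzle : Subgroup.zpowers s ≤ μ.ker := Subgroup.zpowers_le.mpr hs_ker
  -- the fiber over 1
  set Fset : Set (ZMod m) := {y | χ y = 1} with hFset
  have hchi0 : ∀ y : ZMod m, χ y = 0 ↔ y ∈ AddSubgroup.zmultiples ((k : ZMod m)) := by
    intro y
    constructor
    · intro hy
      have hyv : ((y.val : ℕ) : ZMod m) = y := ZMod.natCast_rightInverse y
      have : χ ((y.val : ℕ) : ZMod m) = ((y.val : ℕ) : ZMod k) := map_natCast χ y.val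
      rw [hyv] at this
      rw [this] at hy
      obtain ⟨q, hq⟩ := (ZMod.natCast_eq_zero_iff _ _).mp hy
      refine ⟨(q : ℤ), ?_⟩
      show (q : ℤ) • ((k : ZMod m)) = y
      rw [zsmul_eq_mul]
      push_cast
      rw [mul_comm, ← Nat.cast_mul, ← hq, hyv]
    · rintro ⟨c, rfl⟩
      show χ (c • (k : ZMod m)) = 0
      rw [zsmul_eq_mul, map_mul, map_intCast]
      have : χ ((k : ZMod m)) = ((k : ℕ) : ZMod k) := map_natCast χ k
      rw [this, ZMod.natCast_self, mul_zero]
  have hcardF : Nat.card Fset = m / k := by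
    have e1 : Fset ≃ (AddSubgroup.zmultiples ((k : ZMod m))) := by
      refine ⟨fun y => ⟨y.1 - 1, (hchi0 _).mp ?_⟩, fun z => ⟨z.1 + 1, ?_⟩, ?_, ?_⟩
      · rw [map_sub, y.2, map_one, sub_self]
      · show χ (z.1 + 1) = 1
        rw [map_add, map_one, (hchi0 _).mpr z.2, zero_add]
      · intro y; ext; simp
      · intro z; ext; simp
    rw [Nat.card_congr e1]
    have : Nat.card (AddSubgroup.zmultiples ((k : ZMod m))) = addOrderOf ((k : ZMod m)) :=
      Nat.card_zmultiples _
    rw [this, ZMod.addOrderOf_coe k hm.ne', Nat.gcd_eq_right hk]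
  -- injection from ker μ to the fiber
  set ι : μ.ker → Fset := fun v => ⟨((v : (ZMod m)ˣ) : ZMod m), by
    have hv := v.2
    rw [MonoidHom.mem_ker] at hv
    show χ _ = 1
    have : ((μ (v : (ZMod m)ˣ) : (ZMod k)ˣ) : ZMod k) = χ ((v : (ZMod m)ˣ) : ZMod m) := rfl
    rw [← this, hv, Units.val_one]⟩ with hι
  have hι_inj : Function.Injective ι := by
    intro v w hvw
    have : ((v : (ZMod m)ˣ) : ZMod m) = ((w : (ZMod m)ˣ) : ZMod m) := congrArg Subtype.val hvw
    exact Subtype.ext (Units.ext this)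
  have hker_le : Nat.card μ.ker ≤ m / k := by
    rw [← hcardF]
    exact Nat.card_le_card_of_injective ι hι_inj
  have hdt_le : d / t ≤ m / k := by
    have h1 : Nat.card (Subgroup.zpowers s) = d / t := by rw [Nat.card_zpowers, hs_ord]
    calc d / t = Nat.card (Subgroup.zpowers s) := h1.symm
      _ ≤ Nat.card μ.ker := Subgroup.card_le_of_le hzle
      _ ≤ m / k := hker_le
  have key_le : k * d ≤ m * t := by
    calc k * d = (k * t) * (d / t) := by
          rw [mul_assoc, Nat.mul_div_cancel' htd]
      _ ≤ (k * t) * (m / k) := Nat.mul_le_mul_left _ hdt_le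
      _ = t * (k * (m / k)) := by ring
      _ = t * m := by rw [Nat.mul_div_cancel' hk]
      _ = m * t := mul_comm _ _
  refine ⟨key_le, ?_⟩
  -- strict part
  intro hkm
  -- find a prime p with v_p(k) < v_p(m)
  have hmk1 : m / k ≠ 1 := by
    intro h1
    have := Nat.div_mul_cancel hk
    rw [h1, one_mul] at this
    omega
  set p := (m / k).minFac with hp
  have pp : p.Prime := Nat.minFac_prime hmk1
  have hpdvd_c : p ∣ m / k := Nat.minFac_dvd _
  have hp_m : p ∣ m := hpdvd_c.trans (Nat.div_dvd_of_dvd hk)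
  have hkp_m : k * p ∣ m := by
    obtain ⟨q, hq⟩ := hpdvd_c
    exact ⟨q, by rw [← Nat.div_mul_cancel hk, hq]; ring⟩
  have hdt_lt : d / t < m / k := by
    -- show the containment zpowers s ≤ ker μ has room, or ker μ < Fset
    by_cases hpk : p ∣ k
    · -- unit 1 + m/p of order p in ker μ, not in zpowers s
      set q := m / p with hq
      have hq_pos : 0 < q := Nat.div_pos (Nat.le_of_dvd hm hp_m) pp.pos
      have hp2 : p * p ∣ m := (mul_dvd_mul hpk dvd_rfl).trans hkp_m
      have hkq : k ∣ q := (Nat.dvd_div_iff_mul_dvd hp_m).mpr (by rwa [mul_comm] at hkp_m)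
      have hpq : p ∣ q := (Nat.dvd_div_iff_mul_dvd hp_m).mpr hp2
      set x : ZMod m := ((1 + q : ℕ) : ZMod m) with hx
      have hxp : x ^ p = 1 := by
        obtain ⟨c, hc⟩ := binom_aux p q
        rw [hx, ← Nat.cast_pow, hc]
        push_cast
        have h1 : ((p * q : ℕ) : ZMod m) = 0 := by
          rw [ZMod.natCast_eq_zero_iff]
          exact ⟨1, by rw [Nat.mul_div_cancel' hp_m, mul_one]⟩
        have h2 : ((q ^ 2 : ℕ) : ZMod m) = 0 := by
          rw [ZMod.natCast_eq_zero_iff, pow_two]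
          calc m = p * q := (Nat.mul_div_cancel' hp_m).symm
            _ ∣ q * q := mul_dvd_mul hpq dvd_rfl
        push_cast at h1 h2
        rw [h1, h2]
        ring
      have hx_ne : x ≠ 1 := by
        rw [hx]
        push_cast
        intro hcon
        have : ((q : ℕ) : ZMod m) = 0 := by
          have := sub_eq_zero.mpr hcon
          simpa using this
        rw [ZMod.natCast_eq_zero_iff] at this
        have := Nat.le_of_dvd hq_pos this
        have hqm : q < m := Nat.div_lt_self hm pp.one_lt
        omega
      have hxu : IsUnit x := IsUnit.of_pow_eq_one hxp pp.pos.ne'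
      obtain ⟨xu, hxu_eq⟩ := hxu
      haveI : Fact p.Prime := ⟨pp⟩
      have hxu_ord : orderOf xu = p := by
        rw [← orderOf_units (y := xu), hxu_eq]
        exact orderOf_eq_prime hxp hx_ne
      have hxu_ker : xu ∈ μ.ker := by
        rw [MonoidHom.mem_ker]
        apply Units.ext
        show χ ((xu : (ZMod m)ˣ) : ZMod m) = 1
        rw [hxu_eq, hx]
        have : χ (((1 + q : ℕ) : ZMod m)) = ((1 + q : ℕ) : ZMod k) := map_natCast χ _
        rw [this]
        push_cast
        have : ((q : ℕ) : ZMod k) = 0 := (ZMod.natCast_eq_zero_iff _ _).mpr hkq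
        rw [this, add_zero]
      have hxu_not : xu ∉ Subgroup.zpowers s := by
        intro hmem
        have h1 : orderOf xu ∣ orderOf s := orderOf_dvd_of_mem_zpowers hmem
        rw [hxu_ord, hs_ord] at h1
        have h2 : p ∣ d := h1.trans (Nat.div_dvd_of_dvd htd)
        have h3 : p ∣ Nat.gcd d m := Nat.dvd_gcd h2 hp_m
        rw [hcop] at h3
        exact pp.ne_one (Nat.dvd_one.mp h3)
      have hssub : (Subgroup.zpowers s : Set (ZMod m)ˣ) ⊂ (μ.ker : Set (ZMod m)ˣ) :=
        ⟨hzle, fun hsub => hxu_not (hsub hxu_ker)⟩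
      have hlt : Nat.card (Subgroup.zpowers s) < Nat.card μ.ker := by
        have e3 : Nat.card (Subgroup.zpowers s) = ((Subgroup.zpowers s : Set (ZMod m)ˣ)).ncard := by
          rw [← Nat.card_coe_set_eq]; rfl
        have e4 : Nat.card μ.ker = ((μ.ker : Set (ZMod m)ˣ)).ncard := by
          rw [← Nat.card_coe_set_eq]; rfl
        rw [e3, e4]
        exact Set.ncard_lt_ncard hssub (Set.toFinite _)
      calc d / t = Nat.card (Subgroup.zpowers s) := by rw [Nat.card_zpowers, hs_ord]
        _ < Nat.card μ.ker := hlt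
        _ ≤ m / k := hker_le
    · -- nonunit in the fiber
      have cop_pk : Nat.Coprime p k := (Nat.Prime.coprime_iff_not_dvd pp).mpr hpk
      obtain ⟨N, hN1, hN2⟩ := Nat.chineseRemainder cop_pk 0 1
      have hwF : χ ((N : ℕ) : ZMod m) = 1 := by
        have : χ (((N : ℕ) : ZMod m)) = ((N : ℕ) : ZMod k) := map_natCast χ _
        rw [this]
        have : ((N : ℕ) : ZMod k) = ((1 : ℕ) : ZMod k) := (ZMod.natCast_eq_natCast_iff _ _ _).mpr hN2
        rw [this]; push_cast; rfl
      have hw_nonunit : ¬IsUnit (((N : ℕ) : ZMod m)) := by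
        intro hunit
        have hcopNm : Nat.Coprime N m := (ZMod.isUnit_iff_coprime N m).mp hunit
        have hpN : p ∣ N := (Nat.modEq_zero_iff_dvd).mp hN1
        have : p ∣ Nat.gcd N m := Nat.dvd_gcd hpN hp_m
        rw [hcopNm] at this
        exact pp.ne_one (Nat.dvd_one.mp this)
      have hw_not_range : (⟨((N : ℕ) : ZMod m), hwF⟩ : Fset) ∉ Set.range ι := by
        rintro ⟨v, hv⟩
        apply hw_nonunit
        have : ((v : (ZMod m)ˣ) : ZMod m) = ((N : ℕ) : ZMod m) := congrArg Subtype.val hv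
        exact this ▸ (v : (ZMod m)ˣ).isUnit
      have hker_lt : Nat.card μ.ker < m / k := by
        rw [← hcardF]
        have h1 : Nat.card μ.ker = ((Set.range ι)).ncard := by
          rw [← Nat.card_coe_set_eq]
          exact (Nat.card_range_of_injective hι_inj).symm
        have h2 : (Set.range ι) ⊂ (Set.univ : Set Fset) := by
          refine ⟨Set.subset_univ _, fun hsub => hw_not_range (hsub (Set.mem_univ _))⟩
        calc Nat.card μ.ker = (Set.range ι).ncard := h1
          _ < (Set.univ : Set Fset).ncard := Set.ncard_lt_ncard h2 (Set.toFinite _)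
          _ = Nat.card Fset := Set.ncard_univ _
      calc d / t = Nat.card (Subgroup.zpowers s) := by rw [Nat.card_zpowers, hs_ord]
        _ ≤ Nat.card μ.ker := Subgroup.card_le_of_le hzle
        _ < m / k := hker_lt
  calc k * d = (k * t) * (d / t) := by rw [mul_assoc, Nat.mul_div_cancel' htd]
    _ < (k * t) * (m / k) := by
        exact Nat.mul_lt_mul_of_le_of_lt (le_refl _) hdt_lt (Nat.mul_pos hk0 ht0)
    _ = t * (k * (m / k)) := by ring
    _ = m * t := by rw [Nat.mul_div_cancel' hk]; ring



variable {G : Type*} [Group G] [Finite G]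


lemma exists_cyclic_gen {a : G} (D : Subgroup G) (hD : D ≤ Subgroup.zpowers a) :
    ∃ i0 : ℕ, a ^ i0 ∈ D ∧ orderOf (a ^ i0) = Nat.card D := by
  haveI : IsCyclic (Subgroup.zpowers a) := ⟨⟨a, Subgroup.mem_zpowers a⟩, fun x => by
    obtain ⟨kk, hk⟩ := x.2
    exact ⟨kk, Subtype.ext (by simpa using hk)⟩⟩
  haveI : IsCyclic D := Subgroup.isCyclic_of_le hD
  obtain ⟨g, hg⟩ := IsCyclic.exists_generator (α := D)
  have hord : orderOf g = Nat.card D := orderOf_eq_card_of_forall_mem_zpowers hg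
  have hga : (g : G) ∈ Subgroup.zpowers a := hD g.2
  obtain ⟨i0, hi0⟩ := mem_powers_iff_mem_zpowers.mpr hga
  have hi0' : a ^ i0 = (g : G) := hi0
  exact ⟨i0, hi0' ▸ g.2, by rw [hi0', Subgroup.orderOf_coe, hord]⟩

lemma cent_constraint {a b : G} {m r : ℕ} (hm : 0 < m)
    (ha : orderOf a = m) (hrel : b⁻¹ * a * b = a ^ r) (i0 j i : ℕ)
    (hcomm : a ^ i0 * (b ^ j * a ^ i) = (b ^ j * a ^ i) * a ^ i0) :
    orderOf ((r : ZMod (orderOf (a ^ i0)))) ∣ j := by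
  have h1 : a^i0 * (b^j*a^i) = b^j * a^(i0 * r^j + i) := by
    calc a^i0 * (b^j*a^i) = (a^i0 * b^j) * a^i := by group
      _ = (b^j * a^(i0*r^j)) * a^i := by rw [comm_rule hrel]
      _ = b^j * a^(i0*r^j+i) := by rw [pow_add]; group
  have h2 : (b^j*a^i) * a^i0 = b^j * a^(i + i0) := by rw [pow_add]; group
  rw [h1, h2] at hcomm
  have h3 : a^(i0*r^j+i) = a^(i+i0) := mul_left_cancel hcomm
  have h4 : (i0*r^j+i) ≡ (i+i0) [MOD m] := by rw [← ha]; exact pow_eq_pow_iff_modEq.mp h3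
  have h5 : i0 * r^j ≡ i0 [MOD m] := by
    rw [Nat.add_comm i i0] at h4
    exact Nat.ModEq.add_right_cancel' i h4
  have h6 : r^j ≡ 1 [MOD m / Nat.gcd m i0] := by
    have h5' : i0 * r^j ≡ i0 * 1 [MOD m] := by simpa using h5
    exact Nat.ModEq.cancel_left_div_gcd hm h5'
  have h7 : orderOf (a^i0) = m / Nat.gcd m i0 := by rw [orderOf_pow, ha]
  rw [h7]
  apply orderOf_dvd_of_pow_eq_one
  have h8 : ((r^j : ℕ) : ZMod (m / Nat.gcd m i0)) = ((1:ℕ) : ZMod (m / Nat.gcd m i0)) :=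
    (ZMod.natCast_eq_natCast_iff _ _ _).mpr h6
  push_cast at h8; exact h8

/-- The subgroup of `Multiplicative (ZMod n)` of multiples of `c`. -/
def Tsub (n c : ℕ) : Subgroup (Multiplicative (ZMod n)) :=
  AddSubgroup.toSubgroup (AddSubgroup.zmultiples ((c : ZMod n)))

lemma mem_Tsub {n c : ℕ} (j : ℕ) (hcj : c ∣ j) :
    Multiplicative.ofAdd ((j : ZMod n)) ∈ Tsub n c := by
  obtain ⟨q, rfl⟩ := hcj
  show ((c * q : ℕ) : ZMod n) ∈ AddSubgroup.zmultiples ((c : ZMod n))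
  refine ⟨(q : ℤ), ?_⟩
  show (q : ℤ) • ((c : ZMod n)) = ((c * q : ℕ) : ZMod n)
  rw [zsmul_eq_mul]
  push_cast
  ring

lemma card_Tsub {n c : ℕ} (hn : n ≠ 0) (hc : c ∣ n) : Nat.card (Tsub n c) = n / c := by
  have h1 : Nat.card (Tsub n c) = Nat.card (AddSubgroup.zmultiples ((c : ZMod n))) := rfl
  rw [h1, Nat.card_zmultiples, ZMod.addOrderOf_coe c hn, Nat.gcd_eq_right hc]

lemma ofAdd_mem_Tsub_gen {n c : ℕ} : Multiplicative.ofAdd ((c : ZMod n)) ∈ Tsub n c :=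
  mem_Tsub c (dvd_refl c)


end ZMaux

open ZMaux in
/-- The Chermak–Delgado lattice of `ZM(m,n,r)` is `{⟨a, b^d⟩}`, `d = ord_m(r)`. -/
theorem stmt_11 {G : Type*} [Group G] [Finite G]
    (m n r : ℕ) (hm : 0 < m) (hn : 0 < n)
    (hgcd1 : Nat.gcd m n = 1) (hgcd2 : Nat.gcd m (r - 1) = 1)
    (hrn : r ^ n % m = 1 % m)
    (a b : G) (ha : orderOf a = m) (hb : orderOf b = n)
    (hrel : b⁻¹ * a * b = a ^ r)
    (hgen : Subgroup.closure {a, b} = ⊤)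
    (hcard : Nat.card G = m * n) :
    {H : Subgroup G | ∀ K : Subgroup G, chermakDelgadoMeasure K ≤ chermakDelgadoMeasure H} =
      {Subgroup.closure {a, b ^ ordMod m r}} := by
  classical
  haveI : NeZero n := ⟨hn.ne'⟩
  haveI : NeZero m := ⟨hm.ne'⟩
  set d := ordMod m r with hd_def
  have hd : d = orderOf ((r : ZMod m)) := hd_def
  have hmn : Nat.Coprime m n := hgcd1
  have hrnM : r ^ n ≡ 1 [MOD m] := hrn
  have hrm : (r : ZMod m) ^ n = 1 := by
    have h1 : ((r ^ n : ℕ) : ZMod m) = ((1 : ℕ) : ZMod m) :=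
      (ZMod.natCast_eq_natCast_iff _ _ _).mpr hrnM
    push_cast at h1; exact h1
  have hdn : d ∣ n := hd ▸ orderOf_dvd_of_pow_eq_one hrm
  have hd0 : 0 < d := hd ▸ orderOf_pos_iff.mpr (isOfFinOrder_iff_pow_eq_one.mpr ⟨n, hn, hrm⟩)
  have hcopdm : Nat.Coprime (orderOf ((r : ZMod m))) m := by
    rw [← hd]; exact Nat.Coprime.coprime_dvd_left hdn hmn.symm
  obtain ⟨ψ, hψ⟩ := psi_exists hmn ha hb hrel hgen
  have hker : ψ.ker = Subgroup.zpowers a := psi_ker hmn ha hb hrel hgen ψ hψ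
  have hcardker : Nat.card ψ.ker = m := by rw [hker, Nat.card_zpowers, ha]
  set H := Subgroup.closure {a, b ^ d} with hH
  have haH : a ∈ H := Subgroup.subset_closure (Set.mem_insert _ _)
  have hbdH : b ^ d ∈ H := Subgroup.subset_closure (Set.mem_insert_of_mem _ rfl)
  have hkerH : ψ.ker ≤ H := by rw [hker, Subgroup.zpowers_le]; exact haH
  have hrd_modm : ∀ j : ℕ, d ∣ j → r ^ j ≡ 1 [MOD m] := by
    rintro j ⟨q, rfl⟩
    have h1 : (r : ZMod m) ^ (d * q) = 1 := by
      rw [pow_mul, hd, pow_orderOf_eq_one, one_pow]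
    have h2 : ((r ^ (d*q) : ℕ) : ZMod m) = ((1:ℕ) : ZMod m) := by push_cast; simpa using h1
    exact (ZMod.natCast_eq_natCast_iff _ _ _).mp h2
  have hmemH : ∀ j i : ℕ, d ∣ j → b ^ j * a ^ i ∈ H := by
    rintro j i ⟨q, rfl⟩
    rw [pow_mul]
    exact mul_mem (pow_mem hbdH q) (pow_mem haH i)
  -- centralizer of {a} is H
  have hconstr_d : ∀ j i : ℕ, a * (b^j*a^i) = (b^j*a^i) * a → d ∣ j := by
    intro j i hcomm
    have hcomm' : a^1 * (b^j*a^i) = (b^j*a^i) * a^1 := by simpa using hcomm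
    have hdvd := cent_constraint hm ha hrel 1 j i hcomm'
    have ho1 : orderOf (a^1) = m := by rw [pow_one, ha]
    rw [ho1, ← hd] at hdvd
    exact hdvd
  have habd : a * b ^ d = b ^ d * a := by
    have h1 := comm_rule hrel 1 d
    simp only [pow_one, one_mul] at h1
    rw [h1]
    congr 1
    have : a ^ (r ^ d) = a ^ 1 := by
      rw [pow_eq_pow_iff_modEq, ha]
      exact hrd_modm d dvd_rfl
    simpa using this
  have hCa : Subgroup.centralizer {a} = H := by
    apply le_antisymm
    · intro x hx
      obtain ⟨j, i, rfl⟩ := nf_exists hrel hgen x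
      rw [Subgroup.mem_centralizer_iff] at hx
      have hcomm : a * (b^j*a^i) = (b^j*a^i) * a := hx a rfl
      exact hmemH j i (hconstr_d j i hcomm)
    · rw [hH, Subgroup.closure_le]
      rintro x (rfl | rfl)
      · rw [SetLike.mem_coe, Subgroup.mem_centralizer_iff]
        intro h hh
        rw [Set.mem_singleton_iff] at hh
        rw [hh]
      · rw [SetLike.mem_coe, Subgroup.mem_centralizer_iff]
        intro h hh
        rw [Set.mem_singleton_iff] at hh
        rw [hh]
        exact habd
  have hHrep : ∀ x ∈ H, ∃ j i : ℕ, d ∣ j ∧ x = b^j*a^i := by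
    intro x hx
    obtain ⟨j, i, rfl⟩ := nf_exists hrel hgen x
    rw [← hCa, Subgroup.mem_centralizer_iff] at hx
    exact ⟨j, i, hconstr_d j i (hx a rfl), rfl⟩
  have habel : H ≤ Subgroup.centralizer (H : Set G) := by
    intro x hx
    rw [Subgroup.mem_centralizer_iff]
    intro y hy
    obtain ⟨j1, i1, hdj1, rfl⟩ := hHrep x hx
    obtain ⟨j2, i2, hdj2, rfl⟩ := hHrep y hy
    rw [nf_mul hrel, nf_mul hrel]
    have hbeq : b ^ (j2 + j1) = b ^ (j1 + j2) := by rw [Nat.add_comm]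
    rw [hbeq]
    congr 1
    rw [pow_eq_pow_iff_modEq, ha]
    have e1 : i2 * r ^ j1 + i1 ≡ i2 * 1 + i1 [MOD m] :=
      Nat.ModEq.add_right i1 (Nat.ModEq.mul_left i2 (hrd_modm j1 hdj1))
    have e2 : i1 * r ^ j2 + i2 ≡ i1 * 1 + i2 [MOD m] :=
      Nat.ModEq.add_right i2 (Nat.ModEq.mul_left i1 (hrd_modm j2 hdj2))
    calc i2 * r ^ j1 + i1 ≡ i2 * 1 + i1 [MOD m] := e1
      _ = i1 * 1 + i2 := by ring
      _ ≡ i1 * r ^ j2 + i2 [MOD m] := e2.symm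
  have hcentH : Subgroup.centralizer (H : Set G) = H := by
    apply le_antisymm _ habel
    calc Subgroup.centralizer (H : Set G) ≤ Subgroup.centralizer {a} :=
          Subgroup.centralizer_le (Set.singleton_subset_iff.mpr haH)
      _ = H := hCa
  -- image of H under ψ
  have hψa : ψ a = 1 := by
    have h0 := hψ 0 1
    simpa using h0
  have hψbd : ψ (b ^ d) = Multiplicative.ofAdd ((d : ZMod n)) := by
    have h0 := hψ d 0
    simpa using h0
  have hmapH : H.map ψ = Tsub n d := by
    have h1 : H.map ψ = Subgroup.zpowers (Multiplicative.ofAdd ((d : ZMod n))) := by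
      rw [hH, MonoidHom.map_closure, Set.image_pair, hψa, hψbd,
        Subgroup.zpowers_eq_closure]
      apply le_antisymm
      · rw [Subgroup.closure_le]
        rintro x (rfl | rfl)
        · exact one_mem _
        · exact Subgroup.subset_closure rfl
      · exact Subgroup.closure_mono (Set.singleton_subset_iff.mpr (Set.mem_insert_of_mem _ rfl))
    have h2 : Nat.card (Subgroup.zpowers (Multiplicative.ofAdd ((d : ZMod n)))) = n / d := by
      rw [Nat.card_zpowers, orderOf_ofAdd_eq_addOrderOf, ZMod.addOrderOf_coe d hn.ne',
        Nat.gcd_eq_right hdn]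
    rw [h1]
    apply Subgroup.eq_of_le_of_card_ge (Subgroup.zpowers_le.mpr ofAdd_mem_Tsub_gen)
    rw [card_Tsub hn.ne' hdn, h2]
  have hcardH : Nat.card H = (n / d) * m := by
    have h1 := card_eq_map_mul_inf ψ H
    rw [hmapH, card_Tsub hn.ne' hdn, inf_eq_left.mpr hkerH, hcardker] at h1
    exact h1
  have hmeasH : chermakDelgadoMeasure H = ((n/d) * m) * ((n/d) * m) := by
    rw [chermakDelgadoMeasure, hcentH, hcardH]
  -- helper: order of r mod a divisor of m divides n and is positive
  have hdvd_n_pos : ∀ c : ℕ, c ∣ m → (orderOf ((r : ZMod c)) ∣ n ∧ 0 < orderOf ((r : ZMod c))) := by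
    intro c hc
    have h2 : r ^ n ≡ 1 [MOD c] := hrnM.of_dvd hc
    have h1 : ((r ^ n : ℕ) : ZMod c) = ((1 : ℕ) : ZMod c) :=
      (ZMod.natCast_eq_natCast_iff _ _ _).mpr h2
    push_cast at h1
    exact ⟨orderOf_dvd_of_pow_eq_one h1,
      orderOf_pos_iff.mpr (isOfFinOrder_iff_pow_eq_one.mpr ⟨n, hn, h1⟩)⟩
  -- the key bound and equality analysis
  have key : ∀ K : Subgroup G, chermakDelgadoMeasure K ≤ ((n/d) * m) * ((n/d) * m) ∧
      (chermakDelgadoMeasure K = ((n/d) * m) * ((n/d) * m) → K = H) := by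
    intro K
    set C := Subgroup.centralizer (K : Set G) with hC
    set m' := Nat.card ↥(ψ.ker ⊓ K) with hm'
    set g' := Nat.card ↥(ψ.ker ⊓ C) with hg'
    have hinfK_le : ψ.ker ⊓ K ≤ Subgroup.zpowers a := hker ▸ inf_le_left
    have hinfC_le : ψ.ker ⊓ C ≤ Subgroup.zpowers a := hker ▸ inf_le_left
    have hm'dvd : m' ∣ m := hcardker ▸ Subgroup.card_dvd_of_le inf_le_left
    have hg'dvd : g' ∣ m := hcardker ▸ Subgroup.card_dvd_of_le inf_le_left
    have hm'pos : 0 < m' := Nat.card_pos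
    have hg'pos : 0 < g' := Nat.card_pos
    obtain ⟨i1, hi1mem, hi1ord⟩ := exists_cyclic_gen (ψ.ker ⊓ K) hinfK_le
    obtain ⟨i2, hi2mem, hi2ord⟩ := exists_cyclic_gen (ψ.ker ⊓ C) hinfC_le
    have hi1K : a ^ i1 ∈ K := (Subgroup.mem_inf.mp hi1mem).2
    have hi2C : a ^ i2 ∈ C := (Subgroup.mem_inf.mp hi2mem).2
    set d1 := orderOf ((r : ZMod m')) with hd1
    set d2 := orderOf ((r : ZMod g')) with hd2
    have hd1n : d1 ∣ n := (hdvd_n_pos m' hm'dvd).1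
    have hd2n : d2 ∣ n := (hdvd_n_pos g' hg'dvd).1
    have hd1pos : 0 < d1 := (hdvd_n_pos m' hm'dvd).2
    have hd2pos : 0 < d2 := (hdvd_n_pos g' hg'dvd).2
    have hmapK_le : K.map ψ ≤ Tsub n d2 := by
      rw [Subgroup.map_le_iff_le_comap]
      intro x hxK
      show ψ x ∈ Tsub n d2
      obtain ⟨j, i, rfl⟩ := nf_exists hrel hgen x
      have hcomm : a^i2 * (b^j*a^i) = (b^j*a^i) * a^i2 :=
        (Subgroup.mem_centralizer_iff.mp hi2C _ hxK).symm
      have hdvd := cent_constraint hm ha hrel i2 j i hcomm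
      rw [hi2ord] at hdvd
      rw [hψ]
      exact mem_Tsub j hdvd
    have hmapC_le : C.map ψ ≤ Tsub n d1 := by
      rw [Subgroup.map_le_iff_le_comap]
      intro x hxC
      show ψ x ∈ Tsub n d1
      obtain ⟨j, i, rfl⟩ := nf_exists hrel hgen x
      have hcomm : a^i1 * (b^j*a^i) = (b^j*a^i) * a^i1 :=
        Subgroup.mem_centralizer_iff.mp hxC _ hi1K
      have hdvd := cent_constraint hm ha hrel i1 j i hcomm
      rw [hi1ord] at hdvd
      rw [hψ]
      exact mem_Tsub j hdvd
    set P := Nat.card (K.map ψ) with hP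
    set Pc := Nat.card (C.map ψ) with hPc
    have hPpos : 0 < P := Nat.card_pos
    have hPcpos : 0 < Pc := Nat.card_pos
    have hPd2 : P * d2 ≤ n := by
      have h1 : P ≤ n / d2 := by
        rw [← card_Tsub hn.ne' hd2n]
        exact Subgroup.card_le_of_le hmapK_le
      calc P * d2 ≤ (n/d2) * d2 := Nat.mul_le_mul_right d2 h1
        _ = n := Nat.div_mul_cancel hd2n
    have hPcd1 : Pc * d1 ≤ n := by
      have h1 : Pc ≤ n / d1 := by
        rw [← card_Tsub hn.ne' hd1n]
        exact Subgroup.card_le_of_le hmapC_le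
      calc Pc * d1 ≤ (n/d1) * d1 := Nat.mul_le_mul_right d1 h1
        _ = n := Nat.div_mul_cancel hd1n
    have hNT1 := keyNT m n r m' hm hn hm'dvd hrnM hcopdm
    have hNT2 := keyNT m n r g' hm hn hg'dvd hrnM hcopdm
    rw [← hd] at hNT1 hNT2
    have hmeasK : chermakDelgadoMeasure K = (P * m') * (Pc * g') := by
      rw [chermakDelgadoMeasure, card_eq_map_mul_inf ψ K, card_eq_map_mul_inf ψ C]
    have hcast_eq : chermakDelgadoMeasure K * (d2*(d1*(d*d))) =
        (P*d2) * ((Pc*d1) * ((m'*d) * (g'*d))) := by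
      rw [hmeasK]; ring
    have hrhs_eq : (((n/d)*m) * ((n/d)*m)) * (d2*(d1*(d*d))) =
        n * (n * ((m*d1) * (m*d2))) := by
      conv_rhs => rw [← Nat.div_mul_cancel hdn]
      ring
    have hrest_le : (Pc*d1) * ((m'*d) * (g'*d)) ≤ n * ((m*d1) * (m*d2)) :=
      Nat.mul_le_mul hPcd1 (Nat.mul_le_mul hNT1.1 hNT2.1)
    have hgrand : (P*d2) * ((Pc*d1) * ((m'*d) * (g'*d))) ≤ n * (n * ((m*d1) * (m*d2))) :=
      Nat.mul_le_mul hPd2 hrest_le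
    have hqpos : 0 < d2*(d1*(d*d)) := by positivity
    constructor
    · apply Nat.le_of_mul_le_mul_right _ hqpos
      calc chermakDelgadoMeasure K * (d2*(d1*(d*d)))
          = (P*d2) * ((Pc*d1) * ((m'*d) * (g'*d))) := hcast_eq
        _ ≤ n * (n * ((m*d1) * (m*d2))) := hgrand
        _ = (((n/d)*m) * ((n/d)*m)) * (d2*(d1*(d*d))) := hrhs_eq.symm
    · intro heq
      have heq' : (P*d2) * ((Pc*d1) * ((m'*d) * (g'*d))) = n * (n * ((m*d1) * (m*d2))) := by
        rw [← hcast_eq, heq, hrhs_eq]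
      have e1 := eq_of_le_of_mul_eq hPd2 hrest_le heq'
        (Nat.mul_pos hPpos hd2pos)
        (Nat.mul_pos (Nat.mul_pos hPcpos hd1pos)
          (Nat.mul_pos (Nat.mul_pos hm'pos hd0) (Nat.mul_pos hg'pos hd0)))
      have e2 := eq_of_le_of_mul_eq hPcd1 (Nat.mul_le_mul hNT1.1 hNT2.1) e1.2
        (Nat.mul_pos hPcpos hd1pos)
        (Nat.mul_pos (Nat.mul_pos hm'pos hd0) (Nat.mul_pos hg'pos hd0))
      have e3 := eq_of_le_of_mul_eq hNT1.1 hNT2.1 e2.2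
        (Nat.mul_pos hm'pos hd0) (Nat.mul_pos hg'pos hd0)
      -- equality in keyNT forces m' = m and g' = m
      have hm'm : m' = m := by
        by_contra hne
        have hlt : m' < m := lt_of_le_of_ne (Nat.le_of_dvd hm hm'dvd) hne
        exact (hNT1.2 hlt).ne e3.1
      have hg'm : g' = m := by
        by_contra hne
        have hlt : g' < m := lt_of_le_of_ne (Nat.le_of_dvd hm hg'dvd) hne
        exact (hNT2.2 hlt).ne e3.2
      have hd2d : d2 = d := by rw [hd2, hg'm, hd]
      -- ψ.ker ≤ K
      have hkerK : ψ.ker ≤ K := by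
        have hsub : ψ.ker ⊓ K = ψ.ker :=
          Subgroup.eq_of_le_of_card_ge inf_le_left (by rw [hcardker, ← hm', hm'm])
        rw [← hsub]; exact inf_le_right
      -- map ψ K = Tsub n d
      have hPval : P * d = n := by rw [← hd2d]; exact e1.1
      have hmapK : K.map ψ = Tsub n d := by
        rw [hd2d] at hmapK_le
        apply Subgroup.eq_of_le_of_card_ge hmapK_le
        rw [card_Tsub hn.ne' hdn, ← hP]
        rw [← hPval, Nat.mul_div_cancel _ hd0]
      have hfinal : Subgroup.comap ψ (K.map ψ) = Subgroup.comap ψ (H.map ψ) := by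
        rw [hmapK, hmapH]
      rw [Subgroup.comap_map_eq, Subgroup.comap_map_eq, sup_eq_left.mpr hkerK,
        sup_eq_left.mpr hkerH] at hfinal
      exact hfinal
  -- conclude
  ext K
  simp only [Set.mem_setOf_eq, Set.mem_singleton_iff]
  constructor
  · intro hmax
    have h1 : chermakDelgadoMeasure H ≤ chermakDelgadoMeasure K := hmax H
    have heq : chermakDelgadoMeasure K = ((n/d) * m) * ((n/d) * m) :=
      le_antisymm (key K).1 (hmeasH ▸ h1)
    exact (key K).2 heq
  · intro hKH
    intro K'
    rw [hKH]
    show chermakDelgadoMeasure K' ≤ chermakDelgadoMeasure H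
    rw [hmeasH]
    exact (key K').1
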